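/- Proposition (equality of SRI and symmetrized reference-invariant GE in the limits): the limit as α tends to 1 (with α ≠ 0, 1) of α·SR_α(p̄, q̄) equals the limit as α tends to 1 of α·SD_α(p̄, q̄), and both equal (1/2)·Σ_j p̄_j (r̄_j − 1) ln r̄_j; the same common limit holds as α tends to 0 for the rescalings (1−α)·SR_α and (1−α)·SD_α. Here p̄_j = p_j/Σ_k p_k, q̄_j = q_j/Σ_k q_k, and r̄_j = q̄_j/p̄_j. -/

import Mathlib

open Real Filter Finset

private lemma slope_key' {f : ℝ → ℝ} {x f' : ℝ} (hf : HasDerivAt f f' x) (h0 : f x = 0) :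
    Tendsto (fun α => f α / (α - x)) (nhdsWithin x {x}ᶜ) (nhds f') := by
  have h := hasDerivAt_iff_tendsto_slope.mp hf
  refine h.congr fun α => ?_
  rw [slope_def_field, h0, sub_zero]

private lemma derivA' {m : ℕ} (w r : Fin m → ℝ) (hr : ∀ j, 0 < r j) (α : ℝ) :
    HasDerivAt (fun α : ℝ => ∑ j, w j * r j ^ (1 - α))
      (∑ j, w j * (r j ^ (1 - α) * Real.log (r j) * (-1))) α := by
  apply HasDerivAt.fun_sum
  intro j _
  have h1 : HasDerivAt (fun α : ℝ => 1 - α) (-1) α := (hasDerivAt_id α).const_sub 1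
  have h2 := (Real.hasStrictDerivAt_const_rpow (hr j) (1 - α)).hasDerivAt
  exact (h2.comp α h1).const_mul (w j)

private lemma derivB' {m : ℕ} (w r : Fin m → ℝ) (hr : ∀ j, 0 < r j) (α : ℝ) :
    HasDerivAt (fun α : ℝ => ∑ j, w j * r j ^ α)
      (∑ j, w j * (r j ^ α * Real.log (r j))) α := by
  apply HasDerivAt.fun_sum
  intro j _
  exact ((Real.hasStrictDerivAt_const_rpow (hr j) α).hasDerivAt).const_mul (w j)

private lemma derivG' {m : ℕ} (w r : Fin m → ℝ) (hr : ∀ j, 0 < r j) (α : ℝ) :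
    HasDerivAt (fun α : ℝ => 1 - (1/2 : ℝ) * ∑ j, w j * (r j ^ (1 - α) + r j ^ α))
      (-((1/2 : ℝ) * ∑ j, w j * (r j ^ (1 - α) * Real.log (r j) * (-1) + r j ^ α * Real.log (r j)))) α := by
  have hs : HasDerivAt (fun α : ℝ => ∑ j, w j * (r j ^ (1 - α) + r j ^ α))
      (∑ j, w j * (r j ^ (1 - α) * Real.log (r j) * (-1) + r j ^ α * Real.log (r j))) α := by
    apply HasDerivAt.fun_sum
    intro j _
    have h1 : HasDerivAt (fun α : ℝ => 1 - α) (-1) α := (hasDerivAt_id α).const_sub 1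
    have h2 := ((Real.hasStrictDerivAt_const_rpow (hr j) (1 - α)).hasDerivAt).comp α h1
    have h3 := (Real.hasStrictDerivAt_const_rpow (hr j) α).hasDerivAt
    exact (h2.add h3).const_mul (w j)
  exact (hs.const_mul (1/2 : ℝ)).const_sub 1

private lemma main_aux (m : ℕ) (w r : Fin m → ℝ) (hr : ∀ j, 0 < r j)
    (hw1 : (∑ j, w j) = 1) (hwr : (∑ j, w j * r j) = 1) :
    Filter.Tendsto (fun α : ℝ => α * (-(1 / (2 * α * (1 - α))) *
        Real.log ((∑ j, w j * r j ^ (1 - α)) * (∑ j, w j * r j ^ α))))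
        (nhdsWithin 1 {α : ℝ | α ≠ 0 ∧ α ≠ 1})
        (nhds ((1 / 2) * ∑ j, w j * (r j - 1) * Real.log (r j))) ∧
      Filter.Tendsto (fun α : ℝ => α * ((1 / (α * (1 - α))) *
        (1 - (1 / 2) * ∑ j, w j * (r j ^ (1 - α) + r j ^ α))))
        (nhdsWithin 1 {α : ℝ | α ≠ 0 ∧ α ≠ 1})
        (nhds ((1 / 2) * ∑ j, w j * (r j - 1) * Real.log (r j))) ∧
      Filter.Tendsto (fun α : ℝ => (1 - α) * (-(1 / (2 * α * (1 - α))) *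
        Real.log ((∑ j, w j * r j ^ (1 - α)) * (∑ j, w j * r j ^ α))))
        (nhdsWithin 0 {α : ℝ | α ≠ 0 ∧ α ≠ 1})
        (nhds ((1 / 2) * ∑ j, w j * (r j - 1) * Real.log (r j))) ∧
      Filter.Tendsto (fun α : ℝ => (1 - α) * ((1 / (α * (1 - α))) *
        (1 - (1 / 2) * ∑ j, w j * (r j ^ (1 - α) + r j ^ α))))
        (nhdsWithin 0 {α : ℝ | α ≠ 0 ∧ α ≠ 1})
        (nhds ((1 / 2) * ∑ j, w j * (r j - 1) * Real.log (r j))) := by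
  -- values of the two sums at α = 1 and α = 0
  have hA1 : (∑ j, w j * r j ^ ((1:ℝ) - 1)) = 1 := by
    simp only [sub_self, Real.rpow_zero, mul_one]; exact hw1
  have hB1 : (∑ j, w j * r j ^ (1:ℝ)) = 1 := by
    simp only [Real.rpow_one]; exact hwr
  have hA0 : (∑ j, w j * r j ^ ((1:ℝ) - 0)) = 1 := by
    simp only [sub_zero, Real.rpow_one]; exact hwr
  have hB0 : (∑ j, w j * r j ^ (0:ℝ)) = 1 := by
    simp only [Real.rpow_zero, mul_one]; exact hw1
  -- derivative-value identities
  have e1 : (∑ j, w j * (r j ^ ((1:ℝ) - 1) * Real.log (r j) * (-1)))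
      + (∑ j, w j * (r j ^ ((1:ℝ)) * Real.log (r j)))
      = ∑ j, w j * (r j - 1) * Real.log (r j) := by
    rw [← Finset.sum_add_distrib]
    refine Finset.sum_congr rfl fun j _ => ?_
    rw [sub_self, Real.rpow_zero, Real.rpow_one]; ring
  have e0 : (∑ j, w j * (r j ^ ((1:ℝ) - 0) * Real.log (r j) * (-1)))
      + (∑ j, w j * (r j ^ ((0:ℝ)) * Real.log (r j)))
      = -∑ j, w j * (r j - 1) * Real.log (r j) := by
    rw [← Finset.sum_add_distrib, ← Finset.sum_neg_distrib]
    refine Finset.sum_congr rfl fun j _ => ?_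
    rw [sub_zero, Real.rpow_zero, Real.rpow_one]; ring
  have g1 : (∑ j, w j * (r j ^ ((1:ℝ) - 1) * Real.log (r j) * (-1) + r j ^ ((1:ℝ)) * Real.log (r j)))
      = ∑ j, w j * (r j - 1) * Real.log (r j) := by
    refine Finset.sum_congr rfl fun j _ => ?_
    rw [sub_self, Real.rpow_zero, Real.rpow_one]; ring
  have g0 : (∑ j, w j * (r j ^ ((1:ℝ) - 0) * Real.log (r j) * (-1) + r j ^ ((0:ℝ)) * Real.log (r j)))
      = -∑ j, w j * (r j - 1) * Real.log (r j) := by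
    rw [← Finset.sum_neg_distrib]
    refine Finset.sum_congr rfl fun j _ => ?_
    rw [sub_zero, Real.rpow_zero, Real.rpow_one]; ring
  have hG1v : (∑ j, w j * (r j ^ ((1:ℝ) - 1) + r j ^ ((1:ℝ)))) = 2 := by
    have h : ∀ j, w j * (r j ^ ((1:ℝ) - 1) + r j ^ ((1:ℝ))) = w j + w j * r j := fun j => by
      rw [sub_self, Real.rpow_zero, Real.rpow_one]; ring
    rw [Finset.sum_congr rfl fun j _ => h j, Finset.sum_add_distrib, hw1, hwr]; norm_num
  have hG0v : (∑ j, w j * (r j ^ ((1:ℝ) - 0) + r j ^ ((0:ℝ)))) = 2 := by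
    have h : ∀ j, w j * (r j ^ ((1:ℝ) - 0) + r j ^ ((0:ℝ))) = w j + w j * r j := fun j => by
      rw [sub_zero, Real.rpow_zero, Real.rpow_one]; ring
    rw [Finset.sum_congr rfl fun j _ => h j, Finset.sum_add_distrib, hw1, hwr]; norm_num
  set L := ∑ j, w j * (r j - 1) * Real.log (r j) with hL
  -- F = log (A * B)
  have hF1 : HasDerivAt (fun α : ℝ => Real.log ((∑ j, w j * r j ^ (1 - α)) * (∑ j, w j * r j ^ α))) L 1 := by
    have hne : ((fun α : ℝ => ∑ j, w j * r j ^ (1 - α)) 1) * ((fun α : ℝ => ∑ j, w j * r j ^ α) 1) ≠ 0 := by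
      simp only []; rw [hA1, hB1]; norm_num
    have h := (((derivA' w r hr 1).mul (derivB' w r hr 1)).log hne)
    convert h using 1
    · rfl
    simp only [Pi.mul_apply]
    rw [hA1, hB1, ← e1]; ring
  have hF0 : HasDerivAt (fun α : ℝ => Real.log ((∑ j, w j * r j ^ (1 - α)) * (∑ j, w j * r j ^ α))) (-L) 0 := by
    have hne : ((fun α : ℝ => ∑ j, w j * r j ^ (1 - α)) 0) * ((fun α : ℝ => ∑ j, w j * r j ^ α) 0) ≠ 0 := by
      simp only []; rw [hA0, hB0]; norm_num
    have h := (((derivA' w r hr 0).mul (derivB' w r hr 0)).log hne)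
    convert h using 1
    · rfl
    simp only [Pi.mul_apply]
    rw [hA0, hB0, ← e0]; ring
  have hF1z : (fun α : ℝ => Real.log ((∑ j, w j * r j ^ (1 - α)) * (∑ j, w j * r j ^ α))) 1 = 0 := by
    simp only []; rw [hA1, hB1]; norm_num
  have hF0z : (fun α : ℝ => Real.log ((∑ j, w j * r j ^ (1 - α)) * (∑ j, w j * r j ^ α))) 0 = 0 := by
    simp only []; rw [hA0, hB0]; norm_num
  -- G
  have hG1 : HasDerivAt (fun α : ℝ => 1 - (1/2 : ℝ) * ∑ j, w j * (r j ^ (1 - α) + r j ^ α)) (-((1/2) * L)) 1 := by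
    have h := derivG' w r hr 1
    convert h using 2
    rw [g1]
  have hG0 : HasDerivAt (fun α : ℝ => 1 - (1/2 : ℝ) * ∑ j, w j * (r j ^ (1 - α) + r j ^ α)) ((1/2) * L) 0 := by
    have h := derivG' w r hr 0
    convert h using 1
    rw [g0]; ring
  have hG1z : (fun α : ℝ => 1 - (1/2 : ℝ) * ∑ j, w j * (r j ^ (1 - α) + r j ^ α)) 1 = 0 := by
    show (1:ℝ) - 1/2 * ∑ j, w j * (r j ^ ((1:ℝ) - 1) + r j ^ (1:ℝ)) = 0
    rw [hG1v]; norm_num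
  have hG0z : (fun α : ℝ => 1 - (1/2 : ℝ) * ∑ j, w j * (r j ^ (1 - α) + r j ^ α)) 0 = 0 := by
    show (1:ℝ) - 1/2 * ∑ j, w j * (r j ^ ((1:ℝ) - 0) + r j ^ (0:ℝ)) = 0
    rw [hG0v]; norm_num
  have hsub1 : {α : ℝ | α ≠ 0 ∧ α ≠ 1} ⊆ ({(1:ℝ)}ᶜ : Set ℝ) := fun α hα => hα.2
  have hsub0 : {α : ℝ | α ≠ 0 ∧ α ≠ 1} ⊆ ({(0:ℝ)}ᶜ : Set ℝ) := fun α hα => hα.1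
  refine ⟨?_, ?_, ?_, ?_⟩
  · have t := ((slope_key' hF1 hF1z).const_mul (1/2 : ℝ)).mono_left (nhdsWithin_mono _ hsub1)
    refine Tendsto.congr' ?_ t
    filter_upwards [self_mem_nhdsWithin] with α hα
    obtain ⟨h0, h1⟩ := hα
    have h1' : α - 1 ≠ 0 := sub_ne_zero.mpr h1
    have h1'' : (1:ℝ) - α ≠ 0 := sub_ne_zero.mpr (Ne.symm h1)
    field_simp
    ring
  · have t := ((slope_key' hG1 hG1z).neg).mono_left (nhdsWithin_mono _ hsub1)
    rw [neg_neg] at t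
    refine Tendsto.congr' ?_ t
    filter_upwards [self_mem_nhdsWithin] with α hα
    obtain ⟨h0, h1⟩ := hα
    have h1' : α - 1 ≠ 0 := sub_ne_zero.mpr h1
    have h1'' : (1:ℝ) - α ≠ 0 := sub_ne_zero.mpr (Ne.symm h1)
    field_simp
    ring
  · have t := ((slope_key' hF0 hF0z).const_mul (-(1/2) : ℝ)).mono_left (nhdsWithin_mono _ hsub0)
    have veq : (-(1/2) : ℝ) * (-L) = (1/2) * L := by ring
    rw [veq] at t
    refine Tendsto.congr' ?_ t
    filter_upwards [self_mem_nhdsWithin] with α hα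
    obtain ⟨h0, h1⟩ := hα
    have h1'' : (1:ℝ) - α ≠ 0 := sub_ne_zero.mpr (Ne.symm h1)
    rw [sub_zero]
    field_simp
  · have t := (slope_key' hG0 hG0z).mono_left (nhdsWithin_mono _ hsub0)
    refine Tendsto.congr' ?_ t
    filter_upwards [self_mem_nhdsWithin] with α hα
    obtain ⟨h0, h1⟩ := hα
    have h1'' : (1:ℝ) - α ≠ 0 := sub_ne_zero.mpr (Ne.symm h1)
    rw [sub_zero]
    field_simp


/-- Symmetrized Rényi index on the normalized distributions
`p̄_j = p_j/Σ p`, `q̄_j = q_j/Σ q`, `r̄_j = q̄_j/p̄_j`: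
`SR_α(p̄,q̄) = −(1/(2α(1−α)))·ln[(Σ_j p̄_j r̄_j^{1−α})·(Σ_j p̄_j r̄_j^{α})]`. -/
noncomputable def symRenyiBar (m : ℕ) (α : ℝ) (p q : Fin m → ℝ) : ℝ :=
  -(1 / (2 * α * (1 - α))) *
    Real.log
      ((∑ j, (p j / ∑ k, p k) * ((q j / ∑ k, q k) / (p j / ∑ k, p k)) ^ (1 - α)) *
       (∑ j, (p j / ∑ k, p k) * ((q j / ∑ k, q k) / (p j / ∑ k, p k)) ^ α))

/-- Symmetrized reference-invariant GE index on the normalized distributions: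
`SD_α(p̄,q̄) = (1/(α(1−α))) · [1 − (1/2) Σ_j p̄_j (r̄_j^{1−α} + r̄_j^{α})]`. -/
noncomputable def symGEBar (m : ℕ) (α : ℝ) (p q : Fin m → ℝ) : ℝ :=
  (1 / (α * (1 - α))) *
    (1 - (1 / 2) * ∑ j, (p j / ∑ k, p k) *
      (((q j / ∑ k, q k) / (p j / ∑ k, p k)) ^ (1 - α) +
       ((q j / ∑ k, q k) / (p j / ∑ k, p k)) ^ α))

/-- Equality of the SRI and the symmetrized reference-invariant GE in the
limits: as `α → 1` (with `α ≠ 0, 1`), both `α·SR_α(p̄,q̄)` and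
`α·SD_α(p̄,q̄)` tend to `(1/2)·Σ_j p̄_j (r̄_j − 1) ln r̄_j`; as `α → 0`, both
`(1−α)·SR_α(p̄,q̄)` and `(1−α)·SD_α(p̄,q̄)` tend to the same quantity. -/
theorem symRenyiBar_symGEBar_tendsto (m : ℕ) (hm : 1 ≤ m) (p q : Fin m → ℝ)
    (hp : ∀ j, 0 < p j) (hq : ∀ j, 0 < q j) :
    Filter.Tendsto (fun α : ℝ => α * symRenyiBar m α p q)
        (nhdsWithin 1 {α : ℝ | α ≠ 0 ∧ α ≠ 1})
        (nhds ((1 / 2) * ∑ j, (p j / ∑ k, p k) *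
          (((q j / ∑ k, q k) / (p j / ∑ k, p k)) - 1) *
          Real.log ((q j / ∑ k, q k) / (p j / ∑ k, p k)))) ∧
      Filter.Tendsto (fun α : ℝ => α * symGEBar m α p q)
        (nhdsWithin 1 {α : ℝ | α ≠ 0 ∧ α ≠ 1})
        (nhds ((1 / 2) * ∑ j, (p j / ∑ k, p k) *
          (((q j / ∑ k, q k) / (p j / ∑ k, p k)) - 1) *
          Real.log ((q j / ∑ k, q k) / (p j / ∑ k, p k)))) ∧
      Filter.Tendsto (fun α : ℝ => (1 - α) * symRenyiBar m α p q)
        (nhdsWithin 0 {α : ℝ | α ≠ 0 ∧ α ≠ 1})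
        (nhds ((1 / 2) * ∑ j, (p j / ∑ k, p k) *
          (((q j / ∑ k, q k) / (p j / ∑ k, p k)) - 1) *
          Real.log ((q j / ∑ k, q k) / (p j / ∑ k, p k)))) ∧
      Filter.Tendsto (fun α : ℝ => (1 - α) * symGEBar m α p q)
        (nhdsWithin 0 {α : ℝ | α ≠ 0 ∧ α ≠ 1})
        (nhds ((1 / 2) * ∑ j, (p j / ∑ k, p k) *
          (((q j / ∑ k, q k) / (p j / ∑ k, p k)) - 1) *
          Real.log ((q j / ∑ k, q k) / (p j / ∑ k, p k)))) := by
  have : Nonempty (Fin m) := Fin.pos_iff_nonempty.mp (by omega)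
  have hS : 0 < ∑ k, p k := Finset.sum_pos (fun i _ => hp i) Finset.univ_nonempty
  have hT : 0 < ∑ k, q k := Finset.sum_pos (fun i _ => hq i) Finset.univ_nonempty
  have hr : ∀ j, 0 < (q j / ∑ k, q k) / (p j / ∑ k, p k) := fun j =>
    div_pos (div_pos (hq j) hT) (div_pos (hp j) hS)
  have hw1 : (∑ j, p j / ∑ k, p k) = 1 := by
    rw [← Finset.sum_div]; exact div_self hS.ne'
  have hwr : (∑ j, (p j / ∑ k, p k) * ((q j / ∑ k, q k) / (p j / ∑ k, p k))) = 1 := by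
    have h : ∀ j, (p j / ∑ k, p k) * ((q j / ∑ k, q k) / (p j / ∑ k, p k)) = q j / ∑ k, q k :=
      fun j => mul_div_cancel₀ _ (div_pos (hp j) hS).ne'
    rw [Finset.sum_congr rfl fun j _ => h j, ← Finset.sum_div]
    exact div_self hT.ne'
  unfold symRenyiBar symGEBar
  exact main_aux m (fun j => p j / ∑ k, p k) (fun j => (q j / ∑ k, q k) / (p j / ∑ k, p k)) hr hw1 hwr
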